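/- Let I and I° be an interior and a co-interior structure on a small category B such that I(Q) and I°(Q) centralize each other in B(Q,Q) for every object Q. Then the assignment B̃(Q,R) = I(Q)\B(Q,R)/I°(R) defines a well-defined quotient category (composition of double cosets is well defined and associative), and there is a canonical full surjective-on-morphisms functor e : B → B̃ which is the identity on objects. -/

import Mathlib

open CategoryTheory

universe v u

/-- The hom-relation of the bi-exterior quotient: two morphisms `R ⟶ Q` are
identified when they lie in the same double coset
`I(Q)\B(Q,R)/I°(R)`, i.e. differ by pre-composition with an automorphism in
`I°(R)` and post-composition with an automorphism in `I(Q)`. -/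
def biRel {B : Type u} [Category.{v} B]
    (I : ∀ Q : B, Subgroup (Aut Q)) (Ic : ∀ Q : B, Subgroup (Aut Q)) :
    HomRel B :=
  fun {R Q} f g => ∃ χ ∈ I Q, ∃ ρ ∈ Ic R, g = ρ.hom ≫ f ≫ χ.hom

/-- Let `I` be an interior and `I°` a co-interior structure on `B` such that
`I(Q)` and `I°(Q)` centralize each other for every object `Q`.  Then the double
coset relation `B̃(Q,R) = I(Q)\B(Q,R)/I°(R)` is a congruence (so that
composition of double cosets is well defined), and the canonical functor
`e : B → B̃` is the identity on objects, full, and surjective on morphisms. -/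
theorem bi_exterior_quotient_well_defined
    {B : Type u} [Category.{v} B]
    (I : ∀ Q : B, Subgroup (Aut Q)) (Ic : ∀ Q : B, Subgroup (Aut Q))
    -- interior structure: `φ ∘ I(R) ⊆ I(Q) ∘ φ`
    (hI : ∀ {R Q : B} (φ : R ⟶ Q), ∀ ρ ∈ I R, ∃ χ ∈ I Q,
      ρ.hom ≫ φ = φ ≫ χ.hom)
    -- co-interior structure: `I°(Q) ∘ φ ⊆ φ ∘ I°(R)`
    (hIc : ∀ {R Q : B} (φ : R ⟶ Q), ∀ χ ∈ Ic Q, ∃ ρ ∈ Ic R,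
      φ ≫ χ.hom = ρ.hom ≫ φ)
    -- `I(Q)` and `I°(Q)` centralize each other
    (hcomm : ∀ (Q : B), ∀ χ ∈ I Q, ∀ ρ ∈ Ic Q,
      χ.hom ≫ ρ.hom = ρ.hom ≫ χ.hom) :
    Congruence (biRel I Ic) ∧
    (∀ X : B, ((Quotient.functor (biRel I Ic)).obj X).as = X) ∧
    (Quotient.functor (biRel I Ic)).Full ∧
    (∀ (X Y : B)
      (f : (Quotient.functor (biRel I Ic)).obj X ⟶
           (Quotient.functor (biRel I Ic)).obj Y),
      ∃ g : X ⟶ Y, (Quotient.functor (biRel I Ic)).map g = f) := by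
  refine ⟨?_, fun X => rfl, inferInstance, fun X Y f => ⟨f.out, Quot.out_eq f⟩⟩
  refine @Congruence.mk _ _ _ (HomRel.IsStableUnderPrecomp.mk ?_) (HomRel.IsStableUnderPostcomp.mk ?_) ?_
  rotate_right
  · intro X Y
    constructor
    · intro f
      exact ⟨1, one_mem _, 1, one_mem _, by show f = Iso.hom (Iso.refl X) ≫ f ≫ Iso.hom (Iso.refl Y); simp⟩
    · rintro f g ⟨χ, hχ, ρ, hρ, rfl⟩
      refine ⟨χ⁻¹, inv_mem hχ, ρ⁻¹, inv_mem hρ, ?_⟩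
      show _ = (ρ⁻¹).hom ≫ _ ≫ (χ⁻¹).hom
      rw [Aut.Aut_inv_def, Aut.Aut_inv_def]; erw [Iso.symm_hom, Iso.symm_hom]
      simp
      erw [Iso.inv_hom_id_assoc, Iso.hom_inv_id, Category.comp_id]
    · rintro f g h ⟨χ, hχ, ρ, hρ, rfl⟩ ⟨χ', hχ', ρ', hρ', rfl⟩
      refine ⟨χ' * χ, mul_mem hχ' hχ, ρ * ρ', mul_mem hρ hρ', ?_⟩
      simp [Aut.Aut_mul_def]
      erw [Iso.trans_hom, Iso.trans_hom]
      simp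
  · rintro X Y Z f g g' ⟨χ, hχ, ρ, hρ, rfl⟩
    obtain ⟨ρ', hρ', hρ'eq⟩ := hIc f ρ hρ
    refine ⟨χ, hχ, ρ', hρ', ?_⟩
    rw [← Category.assoc f, hρ'eq]
    simp
  · rintro X Y Z f f' g ⟨χ, hχ, ρ, hρ, rfl⟩
    obtain ⟨χ', hχ', hχ'eq⟩ := hI g χ hχ
    refine ⟨χ', hχ', ρ, hρ, ?_⟩
    simp only [Category.assoc]
    rw [hχ'eq]
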